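/- Single-particle Hohenberg–Kohn: suppose φ ∈ H¹(𝕋) satisfies φ(x) > 0 for all x ∈ 𝕋, and v, v' ∈ H⁻¹(𝕋) satisfy ∫_𝕋 ∇φ·∇ψ + v(φψ) = 0 and ∫_𝕋 ∇φ·∇ψ + v'(φψ) = 0 for all ψ ∈ H¹(𝕋). Then v = v' as elements of H⁻¹(𝕋). -/

import Mathlib

open MeasureTheory Set Filter ComplexConjugate
open Topology

noncomputable section

/-- Lebesgue measure on one period, modelling the torus `𝕋 = ℝ/(2πℤ)`. -/
def torusMeasure : Measure ℝ := volume.restrict (Set.Ioc 0 (2 * Real.pi))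

/-- `φ` is an `H¹(𝕋)` function (continuous representative) with weak derivative `g`:
both are `2π`-periodic, `g ∈ L²`, and `φ` is the primitive of `g`. -/
def IsH1 (φ g : ℝ → ℂ) : Prop :=
  Function.Periodic φ (2 * Real.pi) ∧ Function.Periodic g (2 * Real.pi) ∧
    MeasureTheory.MemLp g 2 torusMeasure ∧
    ∀ x : ℝ, φ x = φ 0 + ∫ t in (0:ℝ)..x, g t

def L2norm (f : ℝ → ℂ) : ℝ := Real.sqrt (∫ t, ‖f t‖ ^ 2 ∂torusMeasure)

def H1norm (φ g : ℝ → ℂ) : ℝ := Real.sqrt (L2norm φ ^ 2 + L2norm g ^ 2)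

def IsH1R (f g : ℝ → ℝ) : Prop := IsH1 (fun x => (f x : ℂ)) (fun x => (g x : ℂ))

def H1normR (f g : ℝ → ℝ) : ℝ := H1norm (fun x => (f x : ℂ)) (fun x => (g x : ℂ))

def L2inner (f h : ℝ → ℂ) : ℂ := ∫ t, conj (f t) * h t ∂torusMeasure

/-- An element of `H⁻¹(𝕋)`: a bounded linear functional on `H¹(𝕋)`. -/
structure Hneg1 where
  toFun : (ℝ → ℂ) → ℂ
  map_add' : ∀ φ gφ ψ gψ, IsH1 φ gφ → IsH1 ψ gψ → toFun (φ + ψ) = toFun φ + toFun ψ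
  map_smul' : ∀ (c : ℂ) φ g, IsH1 φ g → toFun (c • φ) = c * toFun φ
  bound' : ∃ C : ℝ, ∀ φ g, IsH1 φ g → ‖toFun φ‖ ≤ C * H1norm φ g

/-- The `H⁻¹` (dual) norm. -/
def dualNorm (v : Hneg1) : ℝ :=
  sInf {C : ℝ | 0 ≤ C ∧ ∀ φ g, IsH1 φ g → ‖v.toFun φ‖ ≤ C * H1norm φ g}

/-- `v` is a real potential: it takes real values on real-valued `H¹` functions. -/
def IsRealPotential (v : Hneg1) : Prop :=
  ∀ φ g, IsH1 φ g → (∀ x, (φ x).im = 0) → (v.toFun φ).im = 0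

/-- `φ` (with weak derivative `g`) is an eigenfunction of `h(v) = -Δ + v`
with eigenvalue `lam`, in the weak (form) sense. -/
def IsEigenpair (v : Hneg1) (lam : ℝ) (φ g : ℝ → ℂ) : Prop :=
  IsH1 φ g ∧ (∃ x, φ x ≠ 0) ∧
    ∀ ψ h, IsH1 ψ h →
      (∫ t, conj (g t) * h t ∂torusMeasure) + v.toFun (fun x => conj (φ x) * ψ x)
        = lam * L2inner φ ψ

/-- Ground state: eigenpair with minimal eigenvalue. -/
def IsGroundPair (v : Hneg1) (lam : ℝ) (φ g : ℝ → ℂ) : Prop :=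
  IsEigenpair v lam φ g ∧ ∀ μ ψ h, IsEigenpair v μ ψ h → lam ≤ μ

section HKaux

variable {𝕜 : Type*} [RCLike 𝕜]

/-- A periodic function integrable on one period is interval integrable everywhere. -/
lemma aux_per_intInt {f : ℝ → 𝕜} {T : ℝ} (hT : 0 < T) (hper : Function.Periodic f T)
    (h0 : IntervalIntegrable f volume 0 T) (a b : ℝ) : IntervalIntegrable f volume a b := by
  have hpiece : ∀ n : ℤ, IntervalIntegrable f volume (n * T) (n * T + T) := by
    intro n
    have h := h0.comp_sub_right (n * T)
    simp only [zero_add] at h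
    have hf : (fun x => f (x - n * T)) = f := by
      funext x; exact hper.sub_int_mul_eq n
    rw [hf] at h
    have e : (n : ℝ) * T + T = T + n * T := by ring
    rwa [e]
  have hsymm : ∀ n : ℕ, IntervalIntegrable f volume (-(n : ℝ) * T) ((n : ℝ) * T) := by
    intro n
    induction n with
    | zero => simp
    | succ m ih =>
      have h1 : IntervalIntegrable f volume (-((m : ℝ) + 1) * T) (-(m : ℝ) * T) := by
        have h := hpiece (-(m : ℤ) - 1)
        have e1 : ((-(m : ℤ) - 1 : ℤ) : ℝ) * T = -((m : ℝ) + 1) * T := by push_cast; ring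
        have e2 : ((-(m : ℤ) - 1 : ℤ) : ℝ) * T + T = -(m : ℝ) * T := by push_cast; ring
        rwa [e2, e1] at h
      have h2 : IntervalIntegrable f volume ((m : ℝ) * T) (((m : ℝ) + 1) * T) := by
        have h := hpiece (m : ℤ)
        have e1 : ((m : ℤ) : ℝ) * T = (m : ℝ) * T := by push_cast; ring
        have e2 : ((m : ℤ) : ℝ) * T + T = ((m : ℝ) + 1) * T := by push_cast; ring
        rwa [e2, e1] at h
      have h3 := (h1.trans (ih.trans h2))
      have e1 : (-((m : ℕ) + 1 : ℕ) : ℝ) * T = -((m : ℝ) + 1) * T := by push_cast; ring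
      have e2 : (((m : ℕ) + 1 : ℕ) : ℝ) * T = ((m : ℝ) + 1) * T := by push_cast; ring
      rwa [e1, e2]
  obtain ⟨n, hn⟩ := exists_nat_gt ((max |a| |b|) / T)
  have hnT : max |a| |b| < n * T := (div_lt_iff₀ hT).mp hn
  refine (hsymm n).mono_set ?_
  have h1 : -((n : ℝ) * T) ≤ a ∧ a ≤ n * T :=
    ⟨by nlinarith [neg_abs_le a, le_max_left |a| |b|],
     by nlinarith [le_abs_self a, le_max_left |a| |b|]⟩
  have h2 : -((n : ℝ) * T) ≤ b ∧ b ≤ n * T :=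
    ⟨by nlinarith [neg_abs_le b, le_max_right |a| |b|],
     by nlinarith [le_abs_self b, le_max_right |a| |b|]⟩
  have e : -(n : ℝ) * T = -((n : ℝ) * T) := by ring
  rw [e, Set.uIcc_of_le (by nlinarith : -((n:ℝ) * T) ≤ (n:ℝ) * T)]
  exact Set.uIcc_subset_Icc ⟨h1.1, h1.2⟩ ⟨h2.1, h2.2⟩

/-- Fubini core: product of integrals over `Ioc c d` via a "triangle" decomposition. -/
lemma aux_core {a b : ℝ → 𝕜} {c d : ℝ}
    (ha : IntegrableOn a (Ioc c d) volume) (hb : IntegrableOn b (Ioc c d) volume) :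
    (∫ t in Ioc c d, a t) * (∫ t in Ioc c d, b t)
      = ∫ t in Ioc c d, (a t * (∫ s in Ioc c t, b s) + b t * (∫ s in Ioc c t, a s)) := by
  set μ : Measure ℝ := volume.restrict (Ioc c d) with hμ
  have hDmeas : MeasurableSet {p : ℝ × ℝ | p.2 ≤ p.1} :=
    measurableSet_le measurable_snd measurable_fst
  have hD'meas : MeasurableSet {p : ℝ × ℝ | p.1 ≤ p.2} :=
    measurableSet_le measurable_fst measurable_snd
  have hab : Integrable (fun z : ℝ × ℝ => a z.1 * b z.2) (μ.prod μ) := ha.mul_prod hb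
  have hba : Integrable (fun z : ℝ × ℝ => b z.1 * a z.2) (μ.prod μ) := hb.mul_prod ha
  set F : ℝ × ℝ → 𝕜 := {p : ℝ × ℝ | p.2 ≤ p.1}.indicator (fun z => a z.1 * b z.2) with hF
  set G : ℝ × ℝ → 𝕜 := {p : ℝ × ℝ | p.2 ≤ p.1}.indicator (fun z => b z.1 * a z.2) with hG
  set G' : ℝ × ℝ → 𝕜 := {p : ℝ × ℝ | p.1 ≤ p.2}.indicator (fun z => a z.1 * b z.2) with hG'
  have hFi : Integrable F (μ.prod μ) := hab.indicator hDmeas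
  have hGi : Integrable G (μ.prod μ) := hba.indicator hDmeas
  have hG'i : Integrable G' (μ.prod μ) := hab.indicator hD'meas
  -- the diagonal is null
  have hdiag : (μ.prod μ) {p : ℝ × ℝ | p.1 = p.2} = 0 := by
    have hEmeas : MeasurableSet {p : ℝ × ℝ | p.1 = p.2} :=
      measurableSet_eq_fun measurable_fst measurable_snd
    rw [Measure.prod_apply hEmeas]
    have : ∀ x : ℝ, μ (Prod.mk x ⁻¹' {p : ℝ × ℝ | p.1 = p.2}) = 0 := by
      intro x
      have : (Prod.mk x ⁻¹' {p : ℝ × ℝ | p.1 = p.2}) = {x} := by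
        ext y; simp [eq_comm]
      rw [this]
      exact le_antisymm ((Measure.restrict_apply_le _ _).trans (le_of_eq (measure_singleton x)))
        (zero_le)
    simp [this]
  -- ∫ G = ∫ G'
  have hswap : ∫ z, G z ∂(μ.prod μ) = ∫ z, G' z ∂(μ.prod μ) := by
    have h1 : ∀ z : ℝ × ℝ, G z.swap = G' z := by
      intro z
      simp only [hG, hG', Set.indicator_apply, mem_setOf_eq, Prod.fst_swap, Prod.snd_swap]
      split_ifs with h
      · exact mul_comm _ _
      · rfl
    calc ∫ z, G z ∂(μ.prod μ) = ∫ z, G z.swap ∂(μ.prod μ) := (integral_prod_swap G).symm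
      _ = ∫ z, G' z ∂(μ.prod μ) := by simp_rw [h1]
  -- sum of triangles is the square
  have hsum : ∫ z, F z ∂(μ.prod μ) + ∫ z, G z ∂(μ.prod μ)
      = (∫ t in Ioc c d, a t) * (∫ t in Ioc c d, b t) := by
    rw [hswap, ← integral_add hFi hG'i, ← integral_prod_mul (μ := μ) (ν := μ) a b]
    apply integral_congr_ae
    have hne : ∀ᵐ z ∂(μ.prod μ), z.1 ≠ (z.2 : ℝ) := by
      rw [ae_iff]
      convert hdiag using 2
      ext z; simp
    filter_upwards [hne] with z hz
    simp only [hF, hG', Set.indicator_apply, mem_setOf_eq, Pi.add_apply]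
    rcases lt_or_gt_of_ne hz with h | h
    · rw [if_neg (not_le.mpr h), if_pos h.le, zero_add]
    · rw [if_pos h.le, if_neg (not_le.mpr h), add_zero]
  rw [← hsum]
  have hain : ∀ᵐ t ∂μ, t ∈ Ioc c d := ae_restrict_mem measurableSet_Ioc
  have hFinner : ∀ t ∈ Ioc c d, ∫ s, F (t, s) ∂μ = a t * ∫ s in Ioc c t, b s := by
    intro t ht
    have h1 : (fun s => F (t, s)) = (Iic t).indicator (fun s => a t * b s) := by
      funext s; simp only [hF, Set.indicator_apply, mem_setOf_eq, mem_Iic]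
    have e : Iic t ∩ Ioc c d = Ioc c t := by
      ext s
      simp only [mem_inter_iff, mem_Iic, mem_Ioc]
      exact ⟨fun ⟨h3, h1', _⟩ => ⟨h1', h3⟩, fun ⟨h1', h2'⟩ => ⟨h2', h1', h2'.trans ht.2⟩⟩
    rw [h1, integral_indicator measurableSet_Iic, hμ,
      Measure.restrict_restrict measurableSet_Iic, e, integral_const_mul]
  have hGinner : ∀ t ∈ Ioc c d, ∫ s, G (t, s) ∂μ = b t * ∫ s in Ioc c t, a s := by
    intro t ht
    have h1 : (fun s => G (t, s)) = (Iic t).indicator (fun s => b t * a s) := by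
      funext s; simp only [hG, Set.indicator_apply, mem_setOf_eq, mem_Iic]
    have e : Iic t ∩ Ioc c d = Ioc c t := by
      ext s
      simp only [mem_inter_iff, mem_Iic, mem_Ioc]
      exact ⟨fun ⟨h3, h1', _⟩ => ⟨h1', h3⟩, fun ⟨h1', h2'⟩ => ⟨h2', h1', h2'.trans ht.2⟩⟩
    rw [h1, integral_indicator measurableSet_Iic, hμ,
      Measure.restrict_restrict measurableSet_Iic, e, integral_const_mul]
  have hFfub : ∫ z, F z ∂(μ.prod μ) = ∫ t, (∫ s, F (t, s) ∂μ) ∂μ :=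
    (integral_integral (f := fun t s => F (t, s)) hFi).symm
  have hGfub : ∫ z, G z ∂(μ.prod μ) = ∫ t, (∫ s, G (t, s) ∂μ) ∂μ :=
    (integral_integral (f := fun t s => G (t, s)) hGi).symm
  rw [hFfub, hGfub, ← integral_add hFi.integral_prod_left hGi.integral_prod_left]
  apply integral_congr_ae
  filter_upwards [hain] with t ht
  rw [hFinner t ht, hGinner t ht]

lemma aux_AB {a b : ℝ → 𝕜} (ha : ∀ p q : ℝ, IntervalIntegrable a volume p q)
    (hb : ∀ p q : ℝ, IntervalIntegrable b volume p q) (x : ℝ) :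
    (∫ t in (0:ℝ)..x, a t * (∫ s in (0:ℝ)..t, b s))
      + (∫ t in (0:ℝ)..x, (∫ s in (0:ℝ)..t, a s) * b t)
    = (∫ t in (0:ℝ)..x, a t) * (∫ t in (0:ℝ)..x, b t) := by
  rcases le_or_gt 0 x with hx | hx
  · rw [intervalIntegral.integral_of_le hx, intervalIntegral.integral_of_le hx,
      intervalIntegral.integral_of_le hx, intervalIntegral.integral_of_le hx]
    have h1 : ∫ t in Ioc 0 x, (a t * ∫ s in (0:ℝ)..t, b s) ∂volume
        = ∫ t in Ioc 0 x, (a t * ∫ s in Ioc 0 t, b s) ∂volume := by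
      apply setIntegral_congr_fun measurableSet_Ioc
      intro t ht
      show a t * (∫ s in (0:ℝ)..t, b s) = a t * ∫ s in Ioc 0 t, b s
      rw [intervalIntegral.integral_of_le ht.1.le]
    have h2 : ∫ t in Ioc 0 x, ((∫ s in (0:ℝ)..t, a s) * b t) ∂volume
        = ∫ t in Ioc 0 x, (b t * ∫ s in Ioc 0 t, a s) ∂volume := by
      apply setIntegral_congr_fun measurableSet_Ioc
      intro t ht
      show (∫ s in (0:ℝ)..t, a s) * b t = b t * ∫ s in Ioc 0 t, a s
      rw [intervalIntegral.integral_of_le ht.1.le, mul_comm]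
    rw [h1, h2, ← integral_add]
    · rw [aux_core ((intervalIntegrable_iff_integrableOn_Ioc_of_le hx).mp (ha 0 x))
        ((intervalIntegrable_iff_integrableOn_Ioc_of_le hx).mp (hb 0 x))]
    · -- Integrable (fun t => a t * ∫ s in Ioc 0 t, b s) on Ioc 0 x
      have hcont : Continuous fun t : ℝ => ∫ s in (0:ℝ)..t, b s :=
        intervalIntegral.continuous_primitive hb 0
      have := ((ha 0 x).mul_continuousOn hcont.continuousOn)
      have h3 := (intervalIntegrable_iff_integrableOn_Ioc_of_le hx).mp this
      apply h3.congr_fun _ measurableSet_Ioc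
      intro t ht
      show a t * (∫ s in (0:ℝ)..t, b s) = a t * ∫ s in Ioc 0 t, b s
      rw [intervalIntegral.integral_of_le ht.1.le]
    · have hcont : Continuous fun t : ℝ => ∫ s in (0:ℝ)..t, a s :=
        intervalIntegral.continuous_primitive ha 0
      have := ((hb 0 x).continuousOn_mul hcont.continuousOn)
      have h3 := (intervalIntegrable_iff_integrableOn_Ioc_of_le hx).mp this
      apply h3.congr_fun _ measurableSet_Ioc
      intro t ht
      show (∫ s in (0:ℝ)..t, a s) * b t = b t * ∫ s in Ioc 0 t, a s
      rw [intervalIntegral.integral_of_le ht.1.le, mul_comm]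
  · -- negative case
    have hx0 : x ≤ 0 := hx.le
    set Ca : ℝ → 𝕜 := fun t => ∫ s in x..t, a s with hCa
    set Cb : ℝ → 𝕜 := fun t => ∫ s in x..t, b s with hCb
    have hCacont : Continuous Ca := intervalIntegral.continuous_primitive ha x
    have hCbcont : Continuous Cb := intervalIntegral.continuous_primitive hb x
    set A0 : 𝕜 := ∫ t in x..(0:ℝ), a t with hA0
    set B0 : 𝕜 := ∫ t in x..(0:ℝ), b t with hB0
    have hBt : ∀ t : ℝ, (∫ s in (0:ℝ)..t, b s) = Cb t - B0 := by
      intro t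
      have := intervalIntegral.integral_add_adjacent_intervals (hb x 0) (hb 0 t)
      rw [hCb, hB0]; dsimp only
      rw [← this]; ring
    have hAt : ∀ t : ℝ, (∫ s in (0:ℝ)..t, a s) = Ca t - A0 := by
      intro t
      have := intervalIntegral.integral_add_adjacent_intervals (ha x 0) (ha 0 t)
      rw [hCa, hA0]; dsimp only
      rw [← this]; ring
    have haCb : IntervalIntegrable (fun t => a t * Cb t) volume x 0 :=
      (ha x 0).mul_continuousOn hCbcont.continuousOn
    have hCab : IntervalIntegrable (fun t => Ca t * b t) volume x 0 :=
      (hb x 0).continuousOn_mul hCacont.continuousOn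
    have key : (∫ t in x..(0:ℝ), a t * Cb t) + (∫ t in x..(0:ℝ), Ca t * b t) = A0 * B0 := by
      have hIa := (intervalIntegrable_iff_integrableOn_Ioc_of_le hx0).mp (ha x 0)
      have hIb := (intervalIntegrable_iff_integrableOn_Ioc_of_le hx0).mp (hb x 0)
      have hcore := aux_core hIa hIb
      rw [hA0, hB0, intervalIntegral.integral_of_le hx0, intervalIntegral.integral_of_le hx0,
        intervalIntegral.integral_of_le hx0, intervalIntegral.integral_of_le hx0]
      rw [hcore, ← integral_add]
      · apply setIntegral_congr_fun measurableSet_Ioc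
        intro t ht
        show a t * Cb t + Ca t * b t
          = a t * (∫ s in Ioc x t, b s) + b t * (∫ s in Ioc x t, a s)
        rw [hCa, hCb]
        dsimp only
        rw [intervalIntegral.integral_of_le ht.1.le, intervalIntegral.integral_of_le ht.1.le]
        ring
      · exact (intervalIntegrable_iff_integrableOn_Ioc_of_le hx0).mp haCb
      · exact (intervalIntegrable_iff_integrableOn_Ioc_of_le hx0).mp hCab
    -- now convert goal
    have e1 : (∫ t in (0:ℝ)..x, a t * (∫ s in (0:ℝ)..t, b s))
        = -((∫ t in x..(0:ℝ), a t * Cb t) - (∫ t in x..(0:ℝ), a t) * B0) := by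
      rw [intervalIntegral.integral_symm]
      congr 1
      have : (fun t => a t * (∫ s in (0:ℝ)..t, b s)) = fun t => a t * Cb t - a t * B0 := by
        funext t; rw [hBt t]; ring
      rw [this, intervalIntegral.integral_sub haCb ((ha x 0).mul_const B0),
        intervalIntegral.integral_mul_const]
    have e2 : (∫ t in (0:ℝ)..x, (∫ s in (0:ℝ)..t, a s) * b t)
        = -((∫ t in x..(0:ℝ), Ca t * b t) - A0 * (∫ t in x..(0:ℝ), b t)) := by
      rw [intervalIntegral.integral_symm]
      congr 1
      have : (fun t => (∫ s in (0:ℝ)..t, a s) * b t) = fun t => Ca t * b t - A0 * b t := by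
        funext t; rw [hAt t]; ring
      rw [this, intervalIntegral.integral_sub hCab ((hb x 0).const_mul A0),
        intervalIntegral.integral_const_mul]
    have e3 : (∫ t in (0:ℝ)..x, a t) = -A0 := by
      rw [hA0, intervalIntegral.integral_symm]
    have e4 : (∫ t in (0:ℝ)..x, b t) = -B0 := by
      rw [hB0, intervalIntegral.integral_symm]
    rw [e1, e2, e3, e4]
    have : (∫ t in x..(0:ℝ), a t * Cb t) + (∫ t in x..(0:ℝ), Ca t * b t) = A0 * B0 := key
    have e5 : (∫ t in x..(0:ℝ), a t) = A0 := rfl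
    have e6 : (∫ t in x..(0:ℝ), b t) = B0 := rfl
    rw [e5, e6]
    linear_combination -this

/-- Product rule for primitives of interval integrable functions. -/
lemma aux_prod {u w a b : ℝ → 𝕜} (ha : ∀ p q : ℝ, IntervalIntegrable a volume p q)
    (hb : ∀ p q : ℝ, IntervalIntegrable b volume p q)
    (hu : ∀ x, u x = u 0 + ∫ t in (0:ℝ)..x, a t)
    (hw : ∀ x, w x = w 0 + ∫ t in (0:ℝ)..x, b t) (x : ℝ) :
    u x * w x = u 0 * w 0 + ∫ t in (0:ℝ)..x, (a t * w t + u t * b t) := by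
  set A : ℝ → 𝕜 := fun y => ∫ t in (0:ℝ)..y, a t with hA
  set B : ℝ → 𝕜 := fun y => ∫ t in (0:ℝ)..y, b t with hB
  have hAcont : Continuous A := intervalIntegral.continuous_primitive ha 0
  have hBcont : Continuous B := intervalIntegral.continuous_primitive hb 0
  have hint1 : IntervalIntegrable (fun t => a t * w 0) volume 0 x := (ha 0 x).mul_const _
  have hint2 : IntervalIntegrable (fun t => a t * B t) volume 0 x :=
    (ha 0 x).mul_continuousOn hBcont.continuousOn
  have hint3 : IntervalIntegrable (fun t => A t * b t) volume 0 x :=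
    (hb 0 x).continuousOn_mul hAcont.continuousOn
  have hint4 : IntervalIntegrable (fun t => u 0 * b t) volume 0 x := (hb 0 x).const_mul _
  have hsplit : (fun t => a t * w t + u t * b t)
      = fun t => (a t * w 0 + a t * B t) + (A t * b t + u 0 * b t) := by
    funext t
    rw [hu t, hw t]
    ring
  rw [hsplit, intervalIntegral.integral_add (hint1.add hint2) (hint3.add hint4),
    intervalIntegral.integral_add hint1 hint2, intervalIntegral.integral_add hint3 hint4,
    intervalIntegral.integral_mul_const, intervalIntegral.integral_const_mul]
  have hab := aux_AB ha hb x
  rw [hu x, hw x]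
  have eA : (∫ t in (0:ℝ)..x, a t) = A x := rfl
  have eB : (∫ t in (0:ℝ)..x, b t) = B x := rfl
  rw [eA, eB] at *
  linear_combination -hab

/-- Powers of the primitive of a nonneg function. -/
lemma aux_pow {κ : ℝ → ℝ} (hκ : ∀ p q : ℝ, IntervalIntegrable κ volume p q) (n : ℕ) (y : ℝ) :
    (∫ t in (0:ℝ)..y, κ t) ^ (n + 1)
      = ∫ t in (0:ℝ)..y, ((n : ℝ) + 1) * (κ t * (∫ s in (0:ℝ)..t, κ s) ^ n) := by
  set K : ℝ → ℝ := fun y => ∫ t in (0:ℝ)..y, κ t with hK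
  have hKcont : Continuous K := intervalIntegral.continuous_primitive hκ 0
  have hK0 : K 0 = 0 := intervalIntegral.integral_same
  have hKprim : ∀ x, K x = K 0 + ∫ t in (0:ℝ)..x, κ t := by
    intro x; rw [hK0, zero_add]
  induction n generalizing y with
  | zero =>
    simp only [pow_zero, pow_one, Nat.cast_zero, zero_add, mul_one, one_mul]
  | succ n ih =>
    have hb : ∀ p q : ℝ, IntervalIntegrable
        (fun t => ((n : ℝ) + 1) * (κ t * K t ^ n)) volume p q := by
      intro p q
      exact (((hκ p q).mul_continuousOn (hKcont.pow n).continuousOn).const_mul _)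
    have hw : ∀ x, K x ^ (n + 1) = K 0 ^ (n + 1) + ∫ t in (0:ℝ)..x,
        ((n : ℝ) + 1) * (κ t * K t ^ n) := by
      intro x
      rw [hK0, zero_pow (Nat.succ_ne_zero n), zero_add]
      exact ih x
    have hprod := aux_prod hκ hb hKprim
      (w := fun x => K x ^ (n + 1)) (by intro x; simpa using hw x) y
    have e : K y * K y ^ (n + 1) = K y ^ (n + 2) := by ring
    rw [e] at hprod
    rw [show n + 1 + 1 = n + 2 from rfl, hprod]
    rw [hK0, zero_pow (Nat.succ_ne_zero n), mul_zero, zero_add]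
    apply intervalIntegral.integral_congr
    intro t _
    show κ t * K t ^ (n + 1) + K t * (((n : ℝ) + 1) * (κ t * K t ^ n))
      = (((n + 1 : ℕ) : ℝ) + 1) * (κ t * K t ^ (n + 1))
    push_cast
    ring

/-- A continuous solution of `H = ∫ k·H` vanishes (nonnegative half-line). -/
lemma aux_vanish_nonneg {H k : ℝ → 𝕜} (hk : ∀ p q : ℝ, IntervalIntegrable k volume p q)
    (hH : Continuous H) (heq : ∀ y, H y = ∫ t in (0:ℝ)..y, k t * H t)
    {y : ℝ} (hy : 0 ≤ y) : H y = 0 := by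
  set κ : ℝ → ℝ := fun t => ‖k t‖ with hκdef
  have hκ : ∀ p q : ℝ, IntervalIntegrable κ volume p q := fun p q => (hk p q).norm
  set K : ℝ → ℝ := fun s => ∫ t in (0:ℝ)..s, κ t with hK
  have hKcont : Continuous K := intervalIntegral.continuous_primitive hκ 0
  have hKnonneg : ∀ t : ℝ, 0 ≤ t → 0 ≤ K t := by
    intro t ht
    exact intervalIntegral.integral_nonneg ht (fun s _ => norm_nonneg _)
  obtain ⟨M, hM⟩ := isCompact_Icc.exists_bound_of_continuousOn
    (s := Icc (0:ℝ) y) hH.continuousOn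
  have hM0 : 0 ≤ M := le_trans (norm_nonneg (H 0)) (hM 0 ⟨le_refl _, hy⟩)
  have claim : ∀ n : ℕ, ∀ t ∈ Icc (0:ℝ) y, ‖H t‖ ≤ M * K t ^ n / n.factorial := by
    intro n
    induction n with
    | zero => intro t ht; simpa using hM t ht
    | succ n ih =>
      intro t ht
      have ht0 : 0 ≤ t := ht.1
      set g : ℝ → ℝ := fun s => (M / n.factorial) * (κ s * K s ^ n) with hg
      have hgint : IntervalIntegrable g volume 0 t :=
        ((hκ 0 t).mul_continuousOn (hKcont.pow n).continuousOn).const_mul _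
      have hbound : ∀ᵐ s ∂volume.restrict (Set.uIoc (0:ℝ) t), ‖k s * H s‖ ≤ g s := by
        rw [uIoc_of_le ht0]
        filter_upwards [ae_restrict_mem measurableSet_Ioc] with s hs
        have hsIcc : s ∈ Icc (0:ℝ) y := ⟨hs.1.le, hs.2.trans ht.2⟩
        have h1 : ‖k s * H s‖ = κ s * ‖H s‖ := norm_mul _ _
        rw [h1, hg]
        have := ih s hsIcc
        calc κ s * ‖H s‖ ≤ κ s * (M * K s ^ n / n.factorial) := by
              exact mul_le_mul_of_nonneg_left this (norm_nonneg _)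
          _ = M / n.factorial * (κ s * K s ^ n) := by ring
      have h2 : ‖H t‖ ≤ |∫ s in (0:ℝ)..t, g s| := by
        rw [heq t]
        exact intervalIntegral.norm_integral_le_abs_of_norm_le hbound hgint
      have h3 : (∫ s in (0:ℝ)..t, g s) = M * K t ^ (n + 1) / (n + 1).factorial := by
        rw [hg]
        rw [intervalIntegral.integral_const_mul]
        have hp := aux_pow hκ n t
        have e1 : (∫ s in (0:ℝ)..t, κ s * K s ^ n)
            = K t ^ (n + 1) / ((n : ℝ) + 1) := by
          have hne : ((n:ℝ)+1) ≠ 0 := by positivity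
          rw [eq_div_iff hne, mul_comm]
          calc ((n:ℝ)+1) * ∫ s in (0:ℝ)..t, κ s * K s ^ n
              = ∫ s in (0:ℝ)..t, ((n:ℝ)+1) * (κ s * K s ^ n) :=
              (intervalIntegral.integral_const_mul _ _).symm
            _ = K t ^ (n+1) := hp.symm
        have ef : (((n+1).factorial : ℕ) : ℝ) = ((n:ℝ)+1) * (n.factorial : ℝ) := by
          rw [Nat.factorial_succ]; push_cast; ring
        rw [e1, ef]
        have hf1 : (n.factorial : ℝ) ≠ 0 := Nat.cast_ne_zero.mpr n.factorial_ne_zero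
        have hf2 : ((n:ℝ)+1) ≠ 0 := by positivity
        field_simp
        try ring
        try exact Or.inl trivial
      have h4 : 0 ≤ M * K t ^ (n + 1) / (n + 1).factorial := by
        apply div_nonneg
        · exact mul_nonneg hM0 (pow_nonneg (hKnonneg t ht0) _)
        · positivity
      rw [h3, abs_of_nonneg h4] at h2
      exact h2
  have htend : Tendsto (fun n : ℕ => M * (K y ^ n / n.factorial)) atTop (𝓝 (M * 0)) :=
    (FloorSemiring.tendsto_pow_div_factorial_atTop (K y)).const_mul M
  rw [mul_zero] at htend
  have hle : ‖H y‖ ≤ 0 := by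
    apply ge_of_tendsto htend
    filter_upwards with n
    have := claim n y ⟨hy, le_refl _⟩
    calc ‖H y‖ ≤ M * K y ^ n / n.factorial := this
      _ = M * (K y ^ n / n.factorial) := by ring
  exact norm_le_zero_iff.mp hle

/-- A continuous solution of `H = ∫ k·H` vanishes. -/
lemma aux_vanish {H k : ℝ → 𝕜} (hk : ∀ p q : ℝ, IntervalIntegrable k volume p q)
    (hH : Continuous H) (heq : ∀ y, H y = ∫ t in (0:ℝ)..y, k t * H t) (y : ℝ) : H y = 0 := by
  rcases le_or_gt 0 y with hy | hy
  · exact aux_vanish_nonneg hk hH heq hy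
  · set H2 : ℝ → 𝕜 := fun s => H (-s) with hH2
    set k2 : ℝ → 𝕜 := fun s => -k (-s) with hk2
    have hk2int : ∀ p q : ℝ, IntervalIntegrable k2 volume p q := by
      intro p q
      have h := ((IntervalIntegrable.iff_comp_neg).mp (hk (-p) (-q))).neg
      simp only [neg_neg] at h
      exact h
    have hH2cont : Continuous H2 := hH.comp continuous_neg
    have heq2 : ∀ s, H2 s = ∫ t in (0:ℝ)..s, k2 t * H2 t := by
      intro s
      have h1 : H2 s = ∫ t in (0:ℝ)..(-s), k t * H t := heq (-s)
      have h2 : (∫ t in (0:ℝ)..(-s), k t * H t)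
          = ∫ t in (0:ℝ)..s, -(k (-t) * H (-t)) := by
        rw [intervalIntegral.integral_neg]
        have := intervalIntegral.integral_comp_neg (a := (0:ℝ)) (b := s)
          (fun t => k t * H t)
        rw [this, neg_zero, ← intervalIntegral.integral_symm]
      rw [h1, h2]
      apply intervalIntegral.integral_congr
      intro t _
      show -(k (-t) * H (-t)) = k2 t * H2 t
      rw [hk2, hH2]
      ring_nf
    have := aux_vanish_nonneg hk2int hH2cont heq2 (neg_nonneg.mpr hy.le)
    simpa [hH2] using this

/-- The reciprocal of a nonvanishing primitive is a primitive. -/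
lemma aux_inv {f df : ℝ → 𝕜} (hdf : ∀ p q : ℝ, IntervalIntegrable df volume p q)
    (hf : ∀ x, f x = f 0 + ∫ t in (0:ℝ)..x, df t) (hne : ∀ x, f x ≠ 0) (x : ℝ) :
    (f x)⁻¹ = (f 0)⁻¹ + ∫ t in (0:ℝ)..x, df t * (-((f t) ^ 2)⁻¹) := by
  have hfcont : Continuous f := by
    have : f = fun x => f 0 + ∫ t in (0:ℝ)..x, df t := funext hf
    rw [this]
    exact continuous_const.add (intervalIntegral.continuous_primitive hdf 0)
  set q : ℝ → 𝕜 := fun t => df t * (-((f t) ^ 2)⁻¹) with hqdef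
  have hq : ∀ p q' : ℝ, IntervalIntegrable q volume p q' := by
    intro p q'
    exact (hdf p q').mul_continuousOn
      (((hfcont.pow 2).inv₀ (fun t => pow_ne_zero 2 (hne t))).neg.continuousOn)
  set G : ℝ → 𝕜 := fun y => (f 0)⁻¹ + ∫ t in (0:ℝ)..y, q t with hGdef
  have hGcont : Continuous G :=
    continuous_const.add (intervalIntegral.continuous_primitive hq 0)
  have hG0 : G 0 = (f 0)⁻¹ := by
    rw [hGdef]; simp
  have hGprim : ∀ y, G y = G 0 + ∫ t in (0:ℝ)..y, q t := by
    intro y; rw [hG0, hGdef]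
  set H : ℝ → 𝕜 := fun y => f y * G y - 1 with hHdef
  have hHcont : Continuous H := (hfcont.mul hGcont).sub continuous_const
  set k : ℝ → 𝕜 := fun t => df t * (f t)⁻¹ with hkdef
  have hk : ∀ p q' : ℝ, IntervalIntegrable k volume p q' := fun p q' =>
    (hdf p q').mul_continuousOn (hfcont.inv₀ hne).continuousOn
  have heq : ∀ y, H y = ∫ t in (0:ℝ)..y, k t * H t := by
    intro y
    have hprod := aux_prod hdf hq hf hGprim y
    have h1 : H y = ∫ t in (0:ℝ)..y, (df t * G t + f t * q t) := by
      rw [hHdef]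
      dsimp only
      rw [hprod, hG0, mul_inv_cancel₀ (hne 0)]
      ring
    rw [h1]
    apply intervalIntegral.integral_congr
    intro t _
    show df t * G t + f t * q t = k t * H t
    rw [hkdef, hHdef, hqdef]
    dsimp only
    field_simp [hne t, hne 0]
    ring
  have hvanish := aux_vanish hk hHcont heq x
  have h2 : f x * G x = 1 := sub_eq_zero.mp hvanish
  exact inv_eq_of_mul_eq_one_right h2

end HKaux

section HKmain

lemma aux_torus_finite : IsFiniteMeasure torusMeasure :=
  ⟨by rw [torusMeasure, Measure.restrict_apply_univ]; exact measure_Ioc_lt_top⟩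

lemma aux_H1_intInt {g : ℝ → ℂ} (hper : Function.Periodic g (2 * Real.pi))
    (hmem : MeasureTheory.MemLp g 2 torusMeasure) (p q : ℝ) :
    IntervalIntegrable g volume p q := by
  haveI : IsFiniteMeasure torusMeasure := aux_torus_finite
  have h1 : Integrable g torusMeasure := hmem.integrable one_le_two
  have h2 : IntervalIntegrable g volume 0 (2 * Real.pi) :=
    (intervalIntegrable_iff_integrableOn_Ioc_of_le (by positivity)).mpr h1
  exact aux_per_intInt (by positivity) hper h2 p q

end HKmain

/-- Single-particle Hohenberg–Kohn theorem: if a strictly positive `φ ∈ H¹(𝕋)` is a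
zero-energy eigenfunction of both `h(v)` and `h(v')`, then `v = v'` in `H⁻¹(𝕋)`. -/
theorem stmt14 (φ dφ : ℝ → ℝ) (hφ : IsH1R φ dφ) (hpos : ∀ x, 0 < φ x)
    (v v' : Hneg1)
    (hv : ∀ ψ gψ, IsH1 ψ gψ →
      (∫ t, (dφ t : ℂ) * gψ t ∂torusMeasure) + v.toFun (fun x => (φ x : ℂ) * ψ x) = 0)
    (hv' : ∀ ψ gψ, IsH1 ψ gψ →
      (∫ t, (dφ t : ℂ) * gψ t ∂torusMeasure) + v'.toFun (fun x => (φ x : ℂ) * ψ x) = 0) :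
    ∀ ψ gψ, IsH1 ψ gψ → v.toFun ψ = v'.toFun ψ := by
  intro ψ gψ hψ
  have hπ : (0:ℝ) < 2 * Real.pi := by positivity
  obtain ⟨hφper, hdφper, hdφmem, hφprim⟩ := hφ
  obtain ⟨hψper, hgψper, hgψmem, hψprim⟩ := hψ
  set φC : ℝ → ℂ := fun x => (φ x : ℂ) with hφCdef
  set dφC : ℝ → ℂ := fun x => (dφ x : ℂ) with hdφCdef
  have hdφint : ∀ p q : ℝ, IntervalIntegrable dφC volume p q :=
    aux_H1_intInt hdφper hdφmem
  have hgψint : ∀ p q : ℝ, IntervalIntegrable gψ volume p q :=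
    aux_H1_intInt hgψper hgψmem
  have hφCcont : Continuous φC := by
    have he : φC = fun x => φC 0 + ∫ t in (0:ℝ)..x, dφC t := funext hφprim
    rw [he]
    exact continuous_const.add (intervalIntegral.continuous_primitive hdφint 0)
  have hψcont : Continuous ψ := by
    have he : ψ = fun x => ψ 0 + ∫ t in (0:ℝ)..x, gψ t := funext hψprim
    rw [he]
    exact continuous_const.add (intervalIntegral.continuous_primitive hgψint 0)
  have hφne : ∀ x, φC x ≠ 0 := fun x => Complex.ofReal_ne_zero.mpr (ne_of_gt (hpos x))
  -- real continuity, lower bound for φ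
  have hφRcont : Continuous φ := by
    have : φ = fun x => (φC x).re := by funext x; simp [hφCdef]
    rw [this]
    exact Complex.continuous_re.comp hφCcont
  have hφRper : Function.Periodic φ (2 * Real.pi) := by
    intro x
    have h := hφper x
    simp only [hφCdef] at h
    exact_mod_cast h
  obtain ⟨t0, ht0mem, ht0min⟩ := isCompact_Icc.exists_isMinOn
    (Set.nonempty_Icc.mpr (by positivity)) hφRcont.continuousOn
  set εφ : ℝ := φ t0 with hεdef
  have hε : 0 < εφ := hpos t0
  have hεle : ∀ x, εφ ≤ φ x := by
    intro x
    obtain ⟨y, hy, hxy⟩ := hφRper.exists_mem_Ico₀ hπ x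
    rw [hxy]
    exact ht0min (Set.mem_Icc.mpr ⟨hy.1, hy.2.le⟩)
  -- bound for ψ
  obtain ⟨Mψ, hMψIcc⟩ := isCompact_Icc.exists_bound_of_continuousOn
    (s := Icc (0:ℝ) (2 * Real.pi)) hψcont.continuousOn
  have hMψ : ∀ x, ‖ψ x‖ ≤ Mψ := by
    intro x
    obtain ⟨y, hy, hxy⟩ := hψper.exists_mem_Ico₀ hπ x
    rw [hxy]
    exact hMψIcc y (Set.mem_Icc.mpr ⟨hy.1, hy.2.le⟩)
  have hMψ0 : 0 ≤ Mψ := le_trans (norm_nonneg _) (hMψ 0)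
  -- inverse primitive
  have hinv := aux_inv hdφint hφprim hφne
  set qf : ℝ → ℂ := fun t => dφC t * (-((φC t) ^ 2)⁻¹) with hqfdef
  have hφC2ne : ∀ t : ℝ, (φC t) ^ 2 ≠ 0 := fun t => pow_ne_zero 2 (hφne t)
  have hqfcont : Continuous fun t => -((φC t) ^ 2)⁻¹ :=
    ((hφCcont.pow 2).inv₀ hφC2ne).neg
  have hqfint : ∀ p q : ℝ, IntervalIntegrable qf volume p q := fun p q =>
    (hdφint p q).mul_continuousOn hqfcont.continuousOn
  set χ : ℝ → ℂ := fun x => ψ x * (φC x)⁻¹ with hχdef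
  set gχ : ℝ → ℂ := fun t => gψ t * (φC t)⁻¹ + ψ t * qf t with hgχdef
  have hwprim : ∀ x, (φC x)⁻¹ = (φC 0)⁻¹ + ∫ t in (0:ℝ)..x, qf t := hinv
  have hχprim : ∀ x, χ x = χ 0 + ∫ t in (0:ℝ)..x, gχ t := by
    intro x
    exact aux_prod hgψint hqfint hψprim (w := fun x => (φC x)⁻¹) hwprim x
  -- periodicity
  have hφCper : Function.Periodic φC (2 * Real.pi) := hφper
  have hχper : Function.Periodic χ (2 * Real.pi) := by
    intro x
    simp only [hχdef]
    rw [hψper x, hφCper x]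
  have hgχper : Function.Periodic gχ (2 * Real.pi) := by
    intro x
    simp only [hgχdef, hqfdef]
    rw [hψper x, hφCper x, hgψper x, hdφper x]
  -- Memℒp of gχ
  haveI : IsFiniteMeasure torusMeasure := aux_torus_finite
  have hgχmem : MeasureTheory.MemLp gχ 2 torusMeasure := by
    have haesm : AEStronglyMeasurable gχ torusMeasure := by
      apply AEStronglyMeasurable.add
      · exact hgψmem.aestronglyMeasurable.mul
          ((hφCcont.inv₀ hφne).aestronglyMeasurable)
      · exact hψcont.aestronglyMeasurable.mul
          (hdφmem.aestronglyMeasurable.mul hqfcont.aestronglyMeasurable)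
    set g0 : ℝ → ℝ := fun t => εφ⁻¹ * ‖gψ t‖ + (Mψ * (εφ ^ 2)⁻¹) * ‖dφC t‖ with hg0def
    have hg0mem : MeasureTheory.MemLp g0 2 torusMeasure :=
      (hgψmem.norm.const_mul _).add (hdφmem.norm.const_mul _)
    apply hg0mem.mono' haesm
    apply Filter.Eventually.of_forall
    intro t
    have hφval : ‖φC t‖ = φ t := by
      rw [hφCdef]
      simp [Complex.norm_real, abs_of_pos (hpos t)]
    have hn1 : ‖(φC t)⁻¹‖ ≤ εφ⁻¹ := by
      rw [norm_inv, hφval]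
      exact inv_anti₀ hε (hεle t)
    have hn2 : ‖-((φC t) ^ 2)⁻¹‖ ≤ (εφ ^ 2)⁻¹ := by
      rw [norm_neg, norm_inv, norm_pow, hφval]
      apply inv_anti₀ (by positivity)
      exact pow_le_pow_left₀ hε.le (hεle t) 2
    have hb1 : ‖gψ t * (φC t)⁻¹‖ ≤ εφ⁻¹ * ‖gψ t‖ := by
      rw [norm_mul, mul_comm]
      exact mul_le_mul_of_nonneg_right hn1 (norm_nonneg _)
    have hb2 : ‖ψ t * qf t‖ ≤ (Mψ * (εφ ^ 2)⁻¹) * ‖dφC t‖ := by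
      rw [hqfdef]
      calc ‖ψ t * (dφC t * -((φC t) ^ 2)⁻¹)‖
          = ‖ψ t‖ * (‖dφC t‖ * ‖-((φC t) ^ 2)⁻¹‖) := by rw [norm_mul, norm_mul]
        _ ≤ Mψ * (‖dφC t‖ * (εφ ^ 2)⁻¹) := by
            apply mul_le_mul (hMψ t) (mul_le_mul_of_nonneg_left hn2 (norm_nonneg _))
              (by positivity) hMψ0
        _ = (Mψ * (εφ ^ 2)⁻¹) * ‖dφC t‖ := by ring
    calc ‖gχ t‖ ≤ ‖gψ t * (φC t)⁻¹‖ + ‖ψ t * qf t‖ := norm_add_le _ _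
      _ ≤ εφ⁻¹ * ‖gψ t‖ + (Mψ * (εφ ^ 2)⁻¹) * ‖dφC t‖ := add_le_add hb1 hb2
  have hχH1 : IsH1 χ gχ := ⟨hχper, hgχper, hgχmem, hχprim⟩
  -- plug in
  have hveq := hv χ gχ hχH1
  have hv'eq := hv' χ gχ hχH1
  have hfun : (fun x => (φ x : ℂ) * χ x) = ψ := by
    funext x
    show φC x * (ψ x * (φC x)⁻¹) = ψ x
    rw [mul_comm (ψ x), ← mul_assoc, mul_inv_cancel₀ (hφne x), one_mul]
  rw [hfun] at hveq hv'eq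
  linear_combination hveq - hv'eq

end
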